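/- Let Ω be a measurable space, π₀ a probability measure on Ω, and F : [0,1] × Ω → ℝ bounded measurable with ‖F(s, ·)‖_∞ ≤ C_ab for all s and sup_ω |F(r, ω) − F(s, ω)| ≤ L_ab |r − s| for all r, s ∈ [0,1]. Fix a positive integer N, set δ := 1/N and t_k := kδ, and define two sequences of probability measures by π_{t₀} = π̃_{t₀} = π₀, with π_{t_{k+1}} the Gibbs tilt of π_{t_k} by ∫_{t_k}^{t_{k+1}} F(r, ·) dr and π̃_{t_{k+1}} the Gibbs tilt of π̃_{t_k} by δ F(t_k, ·). Then with C₁ := (1/2) L_ab e^{L_ab}, C₂ := 4 C_ab e^{2 C_ab}, and C_global := (C₁/C₂)(e^{C₂} − 1), one has ‖π_{t_k} − π̃_{t_k}‖_TV ≤ C_global δ for all 0 ≤ k ≤ N. If moreover Ω is a compact metric space, then the Wasserstein-1 distance satisfies W₁(π_{t_k}, π̃_{t_k}) ≤ diam(Ω) · C_global δ for all k. -/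

import Mathlib

open MeasureTheory

/-- Total variation distance `(1/2) ∫ |dP/dλ − dQ/dλ| dλ` with the common
dominating measure `λ = P + Q`. -/
noncomputable def tvDist {Ω : Type*} [MeasurableSpace Ω]
    (P Q : Measure Ω) : ℝ :=
  (1 / 2) * ∫ ω, |(P.rnDeriv (P + Q) ω).toReal
    - (Q.rnDeriv (P + Q) ω).toReal| ∂(P + Q)

/-- The Gibbs tilt of `π` by `G`: the probability measure with density
`e^G / ∫ e^G dπ` with respect to `π`. -/
noncomputable def gibbsTilt {Ω : Type*} [MeasurableSpace Ω]
    (π : Measure Ω) (G : Ω → ℝ) : Measure Ω :=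
  π.withDensity fun ω =>
    ENNReal.ofReal (Real.exp (G ω) / ∫ ω', Real.exp (G ω') ∂π)

/-- Wasserstein-1 distance, defined as the infimum of `∫ d(x,y) dγ` over
couplings `γ` of `(P, Q)`. -/
noncomputable def W1 {Ω : Type*} [MeasurableSpace Ω] [PseudoMetricSpace Ω]
    (P Q : Measure Ω) : ℝ :=
  sInf { c | ∃ γ : Measure (Ω × Ω),
    γ.map Prod.fst = P ∧ γ.map Prod.snd = Q ∧ c = ∫ p, dist p.1 p.2 ∂γ }

section Aux
variable {Ω : Type*} [MeasurableSpace Ω]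

lemma integral_wd {π : Measure Ω} {η : Ω → ℝ} (hη : Measurable η) (hη0 : ∀ ω, 0 ≤ η ω)
    (φ : Ω → ℝ) :
    ∫ ω, φ ω ∂(π.withDensity fun ω => ENNReal.ofReal (η ω)) = ∫ ω, η ω * φ ω ∂π := by
  rw [show (fun ω => ENNReal.ofReal (η ω))
      = (fun ω => ((η ω).toNNReal : ENNReal)) from rfl,
    integral_withDensity_eq_integral_smul hη.real_toNNReal]
  congr 1; funext ω
  rw [NNReal.smul_def, smul_eq_mul, Real.coe_toNNReal _ (hη0 ω)]

lemma wd_univ {π : Measure Ω} {η : Ω → ℝ} (hη0 : ∀ ω, 0 ≤ η ω) (hint : Integrable η π) :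
    (π.withDensity fun ω => ENNReal.ofReal (η ω)) Set.univ
      = ENNReal.ofReal (∫ ω, η ω ∂π) := by
  rw [withDensity_apply _ MeasurableSet.univ, setLIntegral_univ,
    ← ofReal_integral_eq_lintegral_ofReal hint (ae_of_all _ hη0)]

lemma integrable_exp_bdd {π : Measure Ω} [IsFiniteMeasure π] {G : Ω → ℝ} (hG : Measurable G)
    {C : ℝ} (hb : ∀ ω, |G ω| ≤ C) : Integrable (fun ω => Real.exp (G ω)) π := by
  refine Integrable.mono' (integrable_const (Real.exp C)) hG.exp.aestronglyMeasurable ?_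
  refine ae_of_all _ fun ω => ?_
  rw [Real.norm_eq_abs, abs_of_pos (Real.exp_pos _)]
  exact Real.exp_le_exp.2 ((abs_le.1 (hb ω)).2)

lemma exp_integral_pos {π : Measure Ω} [IsProbabilityMeasure π] {G : Ω → ℝ} (hG : Measurable G)
    {C : ℝ} (hb : ∀ ω, |G ω| ≤ C) : 0 < ∫ ω, Real.exp (G ω) ∂π := by
  have h1 : ∫ _ω, Real.exp (-C) ∂π ≤ ∫ ω, Real.exp (G ω) ∂π :=
    integral_mono (integrable_const _) (integrable_exp_bdd hG hb)
      (fun ω => Real.exp_le_exp.2 (neg_le_of_abs_le (hb ω)))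
  simp only [integral_const, probReal_univ, smul_eq_mul, one_mul] at h1
  exact lt_of_lt_of_le (Real.exp_pos _) h1

lemma gibbsTilt_isProb {π : Measure Ω} [IsProbabilityMeasure π] {G : Ω → ℝ} (hG : Measurable G)
    {C : ℝ} (hb : ∀ ω, |G ω| ≤ C) : IsProbabilityMeasure (gibbsTilt π G) := by
  set Z := ∫ ω, Real.exp (G ω) ∂π with hZ
  have hZpos : 0 < Z := exp_integral_pos hG hb
  constructor
  rw [gibbsTilt, wd_univ (fun ω => by positivity) ((integrable_exp_bdd hG hb).div_const Z)]
  rw [integral_div, div_self hZpos.ne']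
  simp

lemma gibbsTilt_comp {π : Measure Ω} [IsProbabilityMeasure π] {G H : Ω → ℝ}
    (hG : Measurable G) (hH : Measurable H) {C1 C2 : ℝ}
    (hbG : ∀ ω, |G ω| ≤ C1) (hbH : ∀ ω, |H ω| ≤ C2) :
    gibbsTilt (gibbsTilt π G) H = gibbsTilt π (fun ω => G ω + H ω) := by
  set ZG := ∫ ω, Real.exp (G ω) ∂π with hZG
  set ZGH := ∫ ω, Real.exp (G ω + H ω) ∂π with hZGH
  have hZGpos : 0 < ZG := exp_integral_pos hG hbG
  have hbGH : ∀ ω, |G ω + H ω| ≤ C1 + C2 := fun ω =>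
    (abs_add_le _ _).trans (add_le_add (hbG ω) (hbH ω))
  have hZGHpos : 0 < ZGH := exp_integral_pos (hG.add hH) hbGH
  have hZH' : ∫ ω, Real.exp (H ω) ∂(gibbsTilt π G) = ZGH / ZG := by
    rw [gibbsTilt, integral_wd (hG.exp.div_const ZG) (fun ω => by positivity)]
    rw [← integral_div]
    congr 1; funext ω
    rw [Real.exp_add]; field_simp
  simp only [gibbsTilt] at hZH' ⊢
  rw [hZH',
    ← withDensity_mul _ (hG.exp.div_const ZG).ennreal_ofReal
      ((hH.exp.div_const (ZGH / ZG)).ennreal_ofReal)]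
  congr 1; funext ω
  simp only [Pi.mul_apply]
  rw [← ENNReal.ofReal_mul (by positivity)]
  congr 1
  rw [Real.exp_add]
  field_simp
  ring
  rw [← hZGH, mul_inv_cancel₀ hZGHpos.ne']

end Aux

section TV
variable {Ω : Type*} [MeasurableSpace Ω]

set_option maxHeartbeats 1000000 in
/-- Global TV & W₁ convergence (Theorem 5.1): the exact tilted sequence
`π_{t_{k+1}} = GibbsTilt(π_{t_k}, ∫_{t_k}^{t_{k+1}} F_r dr)` and the frozen
Euler sequence `π̃_{t_{k+1}} = GibbsTilt(π̃_{t_k}, δ F_{t_k})`, both started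
from `π₀`, with `F` uniformly bounded by `C_ab` and time-Lipschitz with
constant `L_ab`, satisfy `‖π_{t_k} − π̃_{t_k}‖_TV ≤ C_global δ` for all
`k ≤ N`, where `C_global = (C₁/C₂)(e^{C₂} − 1)`, `C₁ = (1/2)L_ab e^{L_ab}`,
`C₂ = 4 C_ab e^{2C_ab}`; and if `Ω` is compact, also
`W₁(π_{t_k}, π̃_{t_k}) ≤ diam(Ω) · C_global δ`. -/
lemma tvDist_eq {π : Measure Ω} [IsProbabilityMeasure π] {f g : Ω → ℝ}
    (hf : Measurable f) (hg : Measurable g) (hf0 : ∀ ω, 0 < f ω) (hg0 : ∀ ω, 0 < g ω)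
    (hfi : Integrable f π) (hgi : Integrable g π) :
    tvDist (π.withDensity fun ω => ENNReal.ofReal (f ω))
        (π.withDensity fun ω => ENNReal.ofReal (g ω))
      = (1 / 2) * ∫ ω, |f ω - g ω| ∂π := by
  set P := π.withDensity fun ω => ENNReal.ofReal (f ω) with hPdef
  set Q := π.withDensity fun ω => ENNReal.ofReal (g ω) with hQdef
  have hfg0 : ∀ ω, 0 < f ω + g ω := fun ω => add_pos (hf0 ω) (hg0 ω)
  have hlam : P + Q = π.withDensity fun ω => ENNReal.ofReal (f ω + g ω) := by
    rw [hPdef, hQdef, ← withDensity_add_left hf.ennreal_ofReal]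
    congr 1; funext ω
    simp [ENNReal.ofReal_add (hf0 ω).le (hg0 ω).le]
  haveI hPfin : IsFiniteMeasure P := ⟨by
    rw [hPdef, wd_univ (fun ω => (hf0 ω).le) hfi]; exact ENNReal.ofReal_lt_top⟩
  haveI hQfin : IsFiniteMeasure Q := ⟨by
    rw [hQdef, wd_univ (fun ω => (hg0 ω).le) hgi]; exact ENNReal.ofReal_lt_top⟩
  have hmp : Measurable fun ω => ENNReal.ofReal (f ω / (f ω + g ω)) :=
    (hf.div (hf.add hg)).ennreal_ofReal
  have hmq : Measurable fun ω => ENNReal.ofReal (g ω / (f ω + g ω)) :=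
    (hg.div (hf.add hg)).ennreal_ofReal
  have hP : (P + Q).withDensity (fun ω => ENNReal.ofReal (f ω / (f ω + g ω))) = P := by
    rw [hlam, ← withDensity_mul _ (show Measurable fun ω => ENNReal.ofReal (f ω + g ω) from (hf.add hg).ennreal_ofReal) hmp, hPdef]
    congr 1; funext ω
    simp only [Pi.mul_apply]
    rw [← ENNReal.ofReal_mul (hfg0 ω).le]
    congr 1
    rw [mul_comm, div_mul_cancel₀ _ (hfg0 ω).ne']
  have hQ : (P + Q).withDensity (fun ω => ENNReal.ofReal (g ω / (f ω + g ω))) = Q := by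
    rw [hlam, ← withDensity_mul _ (show Measurable fun ω => ENNReal.ofReal (f ω + g ω) from (hf.add hg).ennreal_ofReal) hmq, hQdef]
    congr 1; funext ω
    simp only [Pi.mul_apply]
    rw [← ENNReal.ofReal_mul (hfg0 ω).le]
    congr 1
    rw [mul_comm, div_mul_cancel₀ _ (hfg0 ω).ne']
  haveI hsf : SigmaFinite (P + Q) := inferInstance
  have hPa := Measure.rnDeriv_withDensity (P + Q) hmp
  have hQa := Measure.rnDeriv_withDensity (P + Q) hmq
  rw [hP] at hPa
  rw [hQ] at hQa
  rw [tvDist]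
  have hint : ∫ ω, |(P.rnDeriv (P + Q) ω).toReal - (Q.rnDeriv (P + Q) ω).toReal| ∂(P + Q)
      = ∫ ω, |f ω / (f ω + g ω) - g ω / (f ω + g ω)| ∂(P + Q) := by
    refine integral_congr_ae ?_
    filter_upwards [hPa, hQa] with ω h1 h2
    rw [h1, h2, ENNReal.toReal_ofReal (div_nonneg (hf0 ω).le (hfg0 ω).le),
      ENNReal.toReal_ofReal (div_nonneg (hg0 ω).le (hfg0 ω).le)]
  rw [hint, hlam, integral_wd (η := fun ω => f ω + g ω) (hf.add hg) (fun ω => (hfg0 ω).le)]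
  congr 1
  refine integral_congr_ae (ae_of_all _ fun ω => ?_)
  show (f ω + g ω) * |f ω / (f ω + g ω) - g ω / (f ω + g ω)| = |f ω - g ω|
  rw [div_sub_div_same, abs_div, abs_of_pos (hfg0 ω), mul_comm,
    div_mul_cancel₀ _ (hfg0 ω).ne']

lemma gibbs_density_diff {π : Measure Ω} [IsProbabilityMeasure π] {G H : Ω → ℝ}
    (hG : Measurable G) (hH : Measurable H) {C ε : ℝ} (hε : 0 ≤ ε)
    (hbG : ∀ ω, |G ω| ≤ C) (hbH : ∀ ω, |H ω| ≤ C)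
    (hGH : ∀ ω, |G ω - H ω| ≤ ε) :
    ∫ ω, |Real.exp (G ω) / (∫ ω', Real.exp (G ω') ∂π)
        - Real.exp (H ω) / (∫ ω', Real.exp (H ω') ∂π)| ∂π
      ≤ Real.exp (2 * ε) - 1 := by
  set ZG := ∫ ω', Real.exp (G ω') ∂π with hZG
  set ZH := ∫ ω', Real.exp (H ω') ∂π with hZH
  have hZGpos : 0 < ZG := exp_integral_pos hG hbG
  have hZHpos : 0 < ZH := exp_integral_pos hH hbH
  have hiG : Integrable (fun ω => Real.exp (G ω)) π := integrable_exp_bdd hG hbG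
  have hiH : Integrable (fun ω => Real.exp (H ω)) π := integrable_exp_bdd hH hbH
  have hZHle : ZH ≤ Real.exp ε * ZG := by
    rw [hZH, hZG, ← integral_const_mul]
    refine integral_mono hiH (hiG.const_mul _) fun ω => ?_
    rw [← Real.exp_add]
    exact Real.exp_le_exp.2 (by have := (abs_le.1 (hGH ω)).1; linarith)
  have hZGle : ZG ≤ Real.exp ε * ZH := by
    rw [hZH, hZG, ← integral_const_mul]
    refine integral_mono hiG (hiH.const_mul _) fun ω => ?_
    rw [← Real.exp_add]
    exact Real.exp_le_exp.2 (by have := (abs_le.1 (hGH ω)).2; linarith)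
  have hexp2 : Real.exp (2 * ε) = Real.exp ε * Real.exp ε := by
    rw [← Real.exp_add]; ring_nf
  have hE1 : (1 : ℝ) ≤ Real.exp (2 * ε) := Real.one_le_exp (by linarith)
  have hkey : ∀ ω, |Real.exp (G ω) / ZG - Real.exp (H ω) / ZH|
      ≤ (Real.exp (2 * ε) - 1) * (Real.exp (H ω) / ZH) := by
    intro ω
    have h1 : Real.exp (G ω) ≤ Real.exp ε * Real.exp (H ω) := by
      rw [← Real.exp_add]
      exact Real.exp_le_exp.2 (by have := (abs_le.1 (hGH ω)).2; linarith)
    have h2 : Real.exp (H ω) ≤ Real.exp ε * Real.exp (G ω) := by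
      rw [← Real.exp_add]
      exact Real.exp_le_exp.2 (by have := (abs_le.1 (hGH ω)).1; linarith)
    have hEH := Real.exp_pos (H ω)
    have hEG := Real.exp_pos (G ω)
    have hinvH : 1 / ZH ≤ Real.exp ε / ZG := by
      rw [div_le_div_iff₀ hZHpos hZGpos]; linarith
    have hinvG : 1 / ZG ≤ Real.exp ε / ZH := by
      rw [div_le_div_iff₀ hZGpos hZHpos]; linarith
    have hauxY : Real.exp (H ω) / ZH ≤ Real.exp (2 * ε) * (Real.exp (G ω) / ZG) := by
      calc Real.exp (H ω) / ZH = Real.exp (H ω) * (1 / ZH) := by ring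
        _ ≤ (Real.exp ε * Real.exp (G ω)) * (Real.exp ε / ZG) :=
            mul_le_mul h2 hinvH (by positivity) (by positivity)
        _ = Real.exp (2 * ε) * (Real.exp (G ω) / ZG) := by rw [hexp2]; ring
    have hauxX : Real.exp (G ω) / ZG ≤ Real.exp (2 * ε) * (Real.exp (H ω) / ZH) := by
      calc Real.exp (G ω) / ZG = Real.exp (G ω) * (1 / ZG) := by ring
        _ ≤ (Real.exp ε * Real.exp (H ω)) * (Real.exp ε / ZH) :=
            mul_le_mul h1 hinvG (by positivity) (by positivity)
        _ = Real.exp (2 * ε) * (Real.exp (H ω) / ZH) := by rw [hexp2]; ring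
    set x := Real.exp (G ω) / ZG with hx
    set y := Real.exp (H ω) / ZH with hy
    have hxpos : 0 < x := by positivity
    have hypos : 0 < y := by positivity
    have hlow : (2 - Real.exp (2 * ε)) * y ≤ x := by
      rcases le_or_gt (2 - Real.exp (2 * ε)) 0 with h | h
      · exact le_trans (mul_nonpos_of_nonpos_of_nonneg h hypos.le) hxpos.le
      · have h' : (2 - Real.exp (2 * ε)) * Real.exp (2 * ε) ≤ 1 := by
          nlinarith [sq_nonneg (Real.exp (2 * ε) - 1)]
        calc (2 - Real.exp (2 * ε)) * y
            ≤ (2 - Real.exp (2 * ε)) * (Real.exp (2 * ε) * x) := by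
              exact mul_le_mul_of_nonneg_left hauxY h.le
          _ = ((2 - Real.exp (2 * ε)) * Real.exp (2 * ε)) * x := by ring
          _ ≤ 1 * x := mul_le_mul_of_nonneg_right h' hxpos.le
          _ = x := one_mul x
    rw [abs_le]
    constructor
    · linarith
    · linarith
  have hintd : Integrable
      (fun ω => |Real.exp (G ω) / ZG - Real.exp (H ω) / ZH|) π :=
    ((hiG.div_const ZG).sub (hiH.div_const ZH)).abs
  calc ∫ ω, |Real.exp (G ω) / ZG - Real.exp (H ω) / ZH| ∂π
      ≤ ∫ ω, (Real.exp (2 * ε) - 1) * (Real.exp (H ω) / ZH) ∂π :=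
        integral_mono hintd (((hiH.div_const ZH).const_mul _)) hkey
    _ = (Real.exp (2 * ε) - 1) * (ZH / ZH) := by
        rw [integral_const_mul, integral_div]
    _ = Real.exp (2 * ε) - 1 := by rw [div_self hZHpos.ne', mul_one]

end TV

section W1sec
variable {Ω : Type*} [MetricSpace Ω] [MeasurableSpace Ω] [BorelSpace Ω] [CompactSpace Ω]

lemma W1_le_coupling {P Q : Measure Ω} (γ : Measure (Ω × Ω))
    (h1 : γ.map Prod.fst = P) (h2 : γ.map Prod.snd = Q) :
    W1 P Q ≤ ∫ p, dist p.1 p.2 ∂γ := by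
  refine csInf_le ⟨0, ?_⟩ ⟨γ, h1, h2, rfl⟩
  rintro c ⟨γ', -, -, rfl⟩
  exact integral_nonneg fun p => dist_nonneg

lemma integrable_dist_pair (ρ : Measure (Ω × Ω)) [IsFiniteMeasure ρ] :
    Integrable (fun p : Ω × Ω => dist p.1 p.2) ρ := by
  refine Integrable.mono' (integrable_const (Metric.diam (Set.univ : Set Ω)))
    (continuous_fst.dist continuous_snd).aestronglyMeasurable (ae_of_all _ fun p => ?_)
  rw [Real.norm_eq_abs, abs_of_nonneg dist_nonneg]
  exact Metric.dist_le_diam_of_mem isCompact_univ.isBounded trivial trivial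

lemma measurable_diag_pair : Measurable fun x : Ω => (x, x) :=
  measurable_id.prodMk measurable_id

lemma integral_dist_diag_map (μ : Measure Ω) :
    ∫ p, dist p.1 p.2 ∂(μ.map fun x => (x, x)) = 0 := by
  rw [integral_map (measurable_diag_pair (Ω := Ω)).aemeasurable
    (continuous_fst.dist continuous_snd).aestronglyMeasurable]
  simp

lemma map_fst_diag (μ : Measure Ω) : (μ.map fun x : Ω => (x, x)).map Prod.fst = μ := by
  rw [Measure.map_map measurable_fst (measurable_diag_pair (Ω := Ω))]
  rw [show (Prod.fst ∘ fun x : Ω => (x, x)) = id from rfl, Measure.map_id]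

lemma map_snd_diag (μ : Measure Ω) : (μ.map fun x : Ω => (x, x)).map Prod.snd = μ := by
  rw [Measure.map_map measurable_snd (measurable_diag_pair (Ω := Ω))]
  rw [show (Prod.snd ∘ fun x : Ω => (x, x)) = id from rfl, Measure.map_id]

lemma W1_le_densities {π : Measure Ω} [IsProbabilityMeasure π] {f g : Ω → ℝ}
    (hf : Measurable f) (hg : Measurable g) (hf0 : ∀ ω, 0 ≤ f ω) (hg0 : ∀ ω, 0 ≤ g ω)
    (hfi : Integrable f π) (hgi : Integrable g π)
    (hf1 : ∫ ω, f ω ∂π = 1) (hg1 : ∫ ω, g ω ∂π = 1) :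
    W1 (π.withDensity fun ω => ENNReal.ofReal (f ω))
        (π.withDensity fun ω => ENNReal.ofReal (g ω))
      ≤ Metric.diam (Set.univ : Set Ω) * ((1 / 2) * ∫ ω, |f ω - g ω| ∂π) := by
  set D := Metric.diam (Set.univ : Set Ω) with hD
  set m := fun ω => min (f ω) (g ω) with hm
  set u := fun ω => f ω - m ω with hu
  set v := fun ω => g ω - m ω with hv
  have hm0 : ∀ ω, 0 ≤ m ω := fun ω => le_min (hf0 ω) (hg0 ω)
  have hu0 : ∀ ω, 0 ≤ u ω := fun ω => sub_nonneg.2 (min_le_left _ _)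
  have hv0 : ∀ ω, 0 ≤ v ω := fun ω => sub_nonneg.2 (min_le_right _ _)
  have hmm : Measurable m := hf.min hg
  have hum : Measurable u := hf.sub hmm
  have hvm : Measurable v := hg.sub hmm
  have hmint : Integrable m π := by
    refine Integrable.mono' (hfi.abs.add hgi.abs) hmm.aestronglyMeasurable
      (ae_of_all _ fun ω => ?_)
    rw [Real.norm_eq_abs]
    exact abs_min_le_max_abs_abs.trans (max_le_add_of_nonneg (abs_nonneg _) (abs_nonneg _))
  have hui : Integrable u π := hfi.sub hmint
  have hvi : Integrable v π := hgi.sub hmint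
  have huv : ∀ ω, u ω + v ω = |f ω - g ω| := by
    intro ω
    rcases le_total (f ω) (g ω) with h | h
    · rw [hu, hv, hm]
      simp only
      rw [min_eq_left h, abs_of_nonpos (by linarith)]; ring
    · rw [hu, hv, hm]
      simp only
      rw [min_eq_right h, abs_of_nonneg (by linarith)]; ring
  have hEq : ∫ ω, u ω ∂π = ∫ ω, v ω ∂π := by
    rw [hu, hv]
    simp only
    rw [integral_sub hfi hmint, integral_sub hgi hmint, hf1, hg1]
  set ε := ∫ ω, u ω ∂π with hεdef
  have hε0 : 0 ≤ ε := integral_nonneg hu0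
  have hhalf : (1 / 2) * ∫ ω, |f ω - g ω| ∂π = ε := by
    have h2 : ε + ε = ∫ ω, |f ω - g ω| ∂π := by
      nth_rewrite 2 [hEq]
      nth_rewrite 1 [hεdef]
      rw [← integral_add hui hvi]
      exact integral_congr_ae (ae_of_all _ huv)
    linarith
  rw [hhalf]
  set P := π.withDensity fun ω => ENNReal.ofReal (f ω) with hP
  set Q := π.withDensity fun ω => ENNReal.ofReal (g ω) with hQ
  rcases eq_or_lt_of_le hε0 with hez | hεpos
  · -- ε = 0 : P = Q, use diagonal coupling
    have hu00 : u =ᵐ[π] 0 :=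
      (integral_eq_zero_iff_of_nonneg hu0 hui).1 hez.symm
    have hv00 : v =ᵐ[π] 0 := by
      refine (integral_eq_zero_iff_of_nonneg hv0 hvi).1 ?_
      rw [← hEq]; exact hez.symm
    have hfg : (fun ω => ENNReal.ofReal (f ω)) =ᵐ[π] fun ω => ENNReal.ofReal (g ω) := by
      filter_upwards [hu00, hv00] with ω h1 h2
      have e1 : f ω = m ω := by
        have : u ω = 0 := h1
        rw [hu] at this; simp only at this; linarith
      have e2 : g ω = m ω := by
        have : v ω = 0 := h2
        rw [hv] at this; simp only at this; linarith
      rw [e1, e2]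
    have hPQ : P = Q := withDensity_congr_ae hfg
    have hle := W1_le_coupling (P := P) (Q := Q) (P.map fun x => (x, x))
      (map_fst_diag P) (by rw [map_snd_diag P, hPQ])
    rw [integral_dist_diag_map] at hle
    rw [← hez, mul_zero]
    exact hle
  · -- ε > 0 : maximal coupling
    set c := ENNReal.ofReal ε with hc
    have hc0 : c ≠ 0 := (ENNReal.ofReal_pos.2 hεpos).ne'
    have hctop : c ≠ ⊤ := ENNReal.ofReal_ne_top
    set Mm := π.withDensity fun ω => ENNReal.ofReal (m ω) with hMm
    set N1 := π.withDensity fun ω => ENNReal.ofReal (u ω) with hN1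
    set N2 := π.withDensity fun ω => ENNReal.ofReal (v ω) with hN2
    have hN1u : N1 Set.univ = c := by rw [hN1, wd_univ hu0 hui]
    have hN2u : N2 Set.univ = c := by rw [hN2, wd_univ hv0 hvi, ← hEq]
    haveI : IsFiniteMeasure Mm := ⟨by
      rw [hMm, wd_univ hm0 hmint]; exact ENNReal.ofReal_lt_top⟩
    haveI : IsFiniteMeasure N1 := ⟨by rw [hN1u]; exact hctop.lt_top⟩
    haveI : IsFiniteMeasure N2 := ⟨by rw [hN2u]; exact hctop.lt_top⟩
    have hPsplit : Mm + N1 = P := by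
      rw [hMm, hN1, hP, ← withDensity_add_left hmm.ennreal_ofReal]
      congr 1; funext ω
      simp only [Pi.add_apply]
      rw [← ENNReal.ofReal_add (hm0 ω) (hu0 ω)]
      congr 1
      rw [hu]; ring_nf
    have hQsplit : Mm + N2 = Q := by
      rw [hMm, hN2, hQ, ← withDensity_add_left hmm.ennreal_ofReal]
      congr 1; funext ω
      simp only [Pi.add_apply]
      rw [← ENNReal.ofReal_add (hm0 ω) (hv0 ω)]
      congr 1
      rw [hv]; ring_nf
    set γ := Mm.map (fun x => (x, x)) + c⁻¹ • (N1.prod N2) with hγ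
    have hfst : γ.map Prod.fst = P := by
      rw [hγ, Measure.map_add _ _ measurable_fst, Measure.map_smul, map_fst_diag,
        Measure.map_fst_prod, hN2u, smul_smul, ENNReal.inv_mul_cancel hc0 hctop, one_smul,
        hPsplit]
    have hsnd : γ.map Prod.snd = Q := by
      rw [hγ, Measure.map_add _ _ measurable_snd, Measure.map_smul, map_snd_diag,
        Measure.map_snd_prod, hN1u, smul_smul, ENNReal.inv_mul_cancel hc0 hctop, one_smul,
        hQsplit]
    haveI hρfin : IsFiniteMeasure (c⁻¹ • N1.prod N2) := by
      constructor
      rw [Measure.smul_apply, smul_eq_mul]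
      exact ENNReal.mul_lt_top (ENNReal.inv_lt_top.2 (ENNReal.ofReal_pos.2 hεpos))
        (measure_lt_top _ _)
    have hintegral : ∫ p, dist p.1 p.2 ∂γ ≤ D * ε := by
      rw [hγ, integral_add_measure (integrable_dist_pair _) (integrable_dist_pair _),
        integral_dist_diag_map, zero_add, integral_smul_measure]
      have hbound : ∫ p, dist p.1 p.2 ∂(N1.prod N2) ≤ D * (ε * ε) := by
        calc ∫ p, dist p.1 p.2 ∂(N1.prod N2)
            ≤ ∫ _p, D ∂(N1.prod N2) := by
              refine integral_mono (integrable_dist_pair _) (integrable_const D) fun p => ?_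
              exact Metric.dist_le_diam_of_mem isCompact_univ.isBounded trivial trivial
          _ = ((N1.prod N2) Set.univ).toReal * D := by rw [integral_const, smul_eq_mul, measureReal_def]
          _ = (ε * ε) * D := by
              rw [← Set.univ_prod_univ, Measure.prod_prod, hN1u, hN2u, hc,
                ← ENNReal.ofReal_mul hε0, ENNReal.toReal_ofReal (by positivity)]
          _ = D * (ε * ε) := by ring
      have htor : (c⁻¹).toReal = ε⁻¹ := by
        rw [ENNReal.toReal_inv, hc, ENNReal.toReal_ofReal hε0]
      calc (c⁻¹).toReal • ∫ p, dist p.1 p.2 ∂(N1.prod N2)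
          ≤ (c⁻¹).toReal * (D * (ε * ε)) := by
            rw [smul_eq_mul]
            refine mul_le_mul_of_nonneg_left hbound (by positivity)
        _ = D * ε := by rw [htor]; field_simp
    exact (W1_le_coupling γ hfst hsnd).trans hintegral

end W1sec

section Wrap
variable {Ω : Type*} [MeasurableSpace Ω]

lemma gibbsTilt_zero {π : Measure Ω} [IsProbabilityMeasure π] :
    gibbsTilt π (fun _ => (0 : ℝ)) = π := by
  rw [gibbsTilt]
  have h1 : (∫ _ω' : Ω, (1:ℝ) ∂π) = 1 := by simp
  simp only [Real.exp_zero, h1]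
  have h2 : (fun _ω : Ω => ENNReal.ofReal ((1:ℝ) / 1)) = fun _ => 1 := by
    funext; norm_num
  rw [h2]
  exact withDensity_one

lemma tvDist_gibbsTilt {π : Measure Ω} [IsProbabilityMeasure π] {G H : Ω → ℝ}
    (hG : Measurable G) (hH : Measurable H) {CG CH : ℝ}
    (hbG : ∀ ω, |G ω| ≤ CG) (hbH : ∀ ω, |H ω| ≤ CH) :
    tvDist (gibbsTilt π G) (gibbsTilt π H)
      = (1 / 2) * ∫ ω, |Real.exp (G ω) / (∫ ω', Real.exp (G ω') ∂π)
          - Real.exp (H ω) / (∫ ω', Real.exp (H ω') ∂π)| ∂π := by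
  unfold gibbsTilt
  exact tvDist_eq (hG.exp.div_const _) (hH.exp.div_const _)
    (fun ω => div_pos (Real.exp_pos _) (exp_integral_pos hG hbG))
    (fun ω => div_pos (Real.exp_pos _) (exp_integral_pos hH hbH))
    ((integrable_exp_bdd hG hbG).div_const _)
    ((integrable_exp_bdd hH hbH).div_const _)

end Wrap

section Wrap2
variable {Ω : Type*} [MetricSpace Ω] [MeasurableSpace Ω] [BorelSpace Ω] [CompactSpace Ω]

lemma W1_gibbsTilt {π : Measure Ω} [IsProbabilityMeasure π] {G H : Ω → ℝ}
    (hG : Measurable G) (hH : Measurable H) {CG CH : ℝ}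
    (hbG : ∀ ω, |G ω| ≤ CG) (hbH : ∀ ω, |H ω| ≤ CH) :
    W1 (gibbsTilt π G) (gibbsTilt π H)
      ≤ Metric.diam (Set.univ : Set Ω)
        * ((1 / 2) * ∫ ω, |Real.exp (G ω) / (∫ ω', Real.exp (G ω') ∂π)
            - Real.exp (H ω) / (∫ ω', Real.exp (H ω') ∂π)| ∂π) := by
  unfold gibbsTilt
  exact W1_le_densities (hG.exp.div_const _) (hH.exp.div_const _)
    (fun ω => (div_pos (Real.exp_pos _) (exp_integral_pos hG hbG)).le)
    (fun ω => (div_pos (Real.exp_pos _) (exp_integral_pos hH hbH)).le)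
    ((integrable_exp_bdd hG hbG).div_const _)
    ((integrable_exp_bdd hH hbH).div_const _)
    (by rw [integral_div, div_self (exp_integral_pos hG hbG).ne'])
    (by rw [integral_div, div_self (exp_integral_pos hH hbH).ne'])

end Wrap2

lemma exp_sub_one_le_mul_exp {x : ℝ} (hx : 0 ≤ x) :
    Real.exp x - 1 ≤ x * Real.exp x := by
  have h := Real.add_one_le_exp (-x)
  have h2 : (1 - x) * Real.exp x ≤ Real.exp (-x) * Real.exp x :=
    mul_le_mul_of_nonneg_right (by linarith) (Real.exp_pos x).le
  rw [← Real.exp_add, neg_add_cancel, Real.exp_zero] at h2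
  nlinarith

set_option maxHeartbeats 1000000 in
theorem global_tv_w1_convergence
    {Ω : Type*} [MetricSpace Ω] [MeasurableSpace Ω] [BorelSpace Ω]
    (π₀ : Measure Ω) [IsProbabilityMeasure π₀]
    (F : ℝ → Ω → ℝ) (hFm : Measurable (Function.uncurry F))
    (Cab Lab : ℝ)
    (hFb : ∀ s ∈ Set.Icc (0:ℝ) 1, ∀ ω, |F s ω| ≤ Cab)
    (hFlip : ∀ r ∈ Set.Icc (0:ℝ) 1, ∀ s ∈ Set.Icc (0:ℝ) 1, ∀ ω,
      |F r ω - F s ω| ≤ Lab * |r - s|)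
    (N : ℕ) (hN : 0 < N)
    (πseq πseq' : ℕ → Measure Ω)
    (hπ0 : πseq 0 = π₀) (hπ'0 : πseq' 0 = π₀)
    (hπ : ∀ k < N, πseq (k + 1)
      = gibbsTilt (πseq k)
          fun ω => ∫ r in ((k : ℝ) / N)..(((k : ℝ) + 1) / N), F r ω)
    (hπ' : ∀ k < N, πseq' (k + 1)
      = gibbsTilt (πseq' k) fun ω => (1 / (N : ℝ)) * F ((k : ℝ) / N) ω) :
    (∀ k ≤ N, tvDist (πseq k) (πseq' k)
      ≤ ((1 / 2) * Lab * Real.exp Lab) / (4 * Cab * Real.exp (2 * Cab))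
          * (Real.exp (4 * Cab * Real.exp (2 * Cab)) - 1) * (1 / (N : ℝ)))
    ∧ (CompactSpace Ω → ∀ k ≤ N,
      W1 (πseq k) (πseq' k)
        ≤ Metric.diam (Set.univ : Set Ω)
          * (((1 / 2) * Lab * Real.exp Lab) / (4 * Cab * Real.exp (2 * Cab))
              * (Real.exp (4 * Cab * Real.exp (2 * Cab)) - 1)
              * (1 / (N : ℝ)))) := by
  -- nonemptiness and sign facts
  obtain ⟨ω₀⟩ : Nonempty Ω := by
    by_contra h
    rw [not_nonempty_iff] at h
    have h1 := measure_univ (μ := π₀)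
    rw [Set.univ_eq_empty_iff.2 h] at h1
    simp at h1
  have hCab : 0 ≤ Cab :=
    le_trans (abs_nonneg _) (hFb 0 ⟨le_refl _, zero_le_one⟩ ω₀)
  have hLab : 0 ≤ Lab := by
    have h := hFlip 0 ⟨le_refl _, zero_le_one⟩ 1 ⟨zero_le_one, le_refl _⟩ ω₀
    have h2 : (0:ℝ) ≤ Lab * |(0:ℝ) - 1| := le_trans (abs_nonneg _) h
    simpa using h2
  have hNpos : (0:ℝ) < N := Nat.cast_pos.2 hN
  set δ := 1 / (N:ℝ) with hδ
  have hδpos : 0 < δ := by positivity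
  have hδle1 : δ ≤ 1 := by
    rw [hδ, div_le_one hNpos]
    exact_mod_cast hN
  set Cg := ((1 / 2) * Lab * Real.exp Lab) / (4 * Cab * Real.exp (2 * Cab))
      * (Real.exp (4 * Cab * Real.exp (2 * Cab)) - 1) with hCg
  -- interval endpoints
  have hab : ∀ j : ℕ, ((j:ℝ)/N) ≤ (((j:ℝ)+1)/N) := fun j => by
    apply (div_le_div_iff_of_pos_right hNpos).mpr
    linarith
  have hsub : ∀ j < N, Set.Icc ((j:ℝ)/N) (((j:ℝ)+1)/N) ⊆ Set.Icc (0:ℝ) 1 := by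
    intro j hj
    apply Set.Icc_subset_Icc
    · positivity
    · rw [div_le_one hNpos]
      have : (j:ℝ) + 1 ≤ N := by exact_mod_cast Nat.succ_le_of_lt hj
      exact this
  have hIsub : ∀ j < N, Set.uIoc ((j:ℝ)/N) (((j:ℝ)+1)/N) ⊆ Set.Icc (0:ℝ) 1 := by
    intro j hj
    rw [Set.uIoc_of_le (hab j)]
    exact (Set.Ioc_subset_Icc_self).trans (hsub j hj)
  have hba : ∀ j : ℕ, (((j:ℝ)+1)/N) - ((j:ℝ)/N) = δ := fun j => by
    rw [div_sub_div_same, hδ]; ring_nf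
  -- slice measurability
  have hFr : ∀ ω, Measurable fun r => F r ω := fun ω =>
    hFm.comp (measurable_id.prodMk measurable_const)
  have hFs : ∀ s, Measurable (F s) := fun s =>
    hFm.comp (measurable_const.prodMk measurable_id)
  -- interval integrability
  have hTint : ∀ j < N, ∀ ω,
      IntervalIntegrable (fun r => F r ω) MeasureTheory.volume ((j:ℝ)/N) (((j:ℝ)+1)/N) := by
    intro j hj ω
    rw [intervalIntegrable_iff]
    haveI : IsFiniteMeasure
        (MeasureTheory.volume.restrict (Set.uIoc ((j:ℝ)/N) (((j:ℝ)+1)/N))) := by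
      constructor
      rw [Measure.restrict_apply_univ, Set.uIoc]
      exact measure_Ioc_lt_top
    refine Integrable.mono' (integrable_const Cab) (hFr ω).aestronglyMeasurable ?_
    refine (ae_restrict_iff' measurableSet_uIoc).2 (ae_of_all _ fun r hr => ?_)
    rw [Real.norm_eq_abs]
    exact hFb r (hIsub j hj hr) ω
  -- define the cumulative potentials
  set T : ℕ → Ω → ℝ := fun j ω => ∫ r in ((j:ℝ)/N)..(((j:ℝ)+1)/N), F r ω with hT
  set A : ℕ → Ω → ℝ := fun k ω => ∑ j ∈ Finset.range k, T j ω with hAdef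
  set B : ℕ → Ω → ℝ := fun k ω => ∑ j ∈ Finset.range k, δ * F ((j:ℝ)/N) ω with hBdef
  -- measurability of T, A, B
  have hTm : ∀ j, Measurable fun ω => T j ω := by
    intro j
    have heq : (fun ω => T j ω)
        = fun ω => ∫ r in Set.Ioc ((j:ℝ)/N) (((j:ℝ)+1)/N), F r ω := by
      funext ω
      exact intervalIntegral.integral_of_le (hab j)
    rw [heq]
    have hsm : MeasureTheory.StronglyMeasurable fun p : Ω × ℝ => F p.2 p.1 :=
      (hFm.comp measurable_swap).stronglyMeasurable
    exact hsm.integral_prod_right'.measurable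
  have hAm : ∀ k, Measurable (A k) := fun k =>
    Finset.measurable_sum _ fun j _ => hTm j
  have hBm : ∀ k, Measurable (B k) := fun k =>
    Finset.measurable_sum _ fun j _ => (hFs _).const_mul δ
  -- per-step bounds
  have hTbd : ∀ j < N, ∀ ω, |T j ω| ≤ Cab * δ := by
    intro j hj ω
    have h := intervalIntegral.norm_integral_le_of_norm_le_const
      (C := Cab) (f := fun r => F r ω) (a := ((j:ℝ)/N)) (b := (((j:ℝ)+1)/N))
      (fun r hr => by rw [Real.norm_eq_abs]; exact hFb r (hIsub j hj hr) ω)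
    rw [Real.norm_eq_abs] at h
    calc |T j ω| ≤ Cab * |(((j:ℝ)+1)/N) - ((j:ℝ)/N)| := h
      _ = Cab * δ := by rw [hba j, abs_of_pos hδpos]
  have hBstep : ∀ j < N, ∀ ω, |δ * F ((j:ℝ)/N) ω| ≤ Cab * δ := by
    intro j hj ω
    rw [abs_mul, abs_of_pos hδpos, mul_comm]
    refine mul_le_mul_of_nonneg_right ?_ hδpos.le
    refine hFb _ ?_ ω
    constructor
    · positivity
    · rw [div_le_one hNpos]
      exact_mod_cast hj.le
  have hTdiff : ∀ j < N, ∀ ω, |T j ω - δ * F ((j:ℝ)/N) ω| ≤ Lab * (δ^2 / 2) := by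
    intro j hj ω
    set a := (j:ℝ)/N with hadef
    set b := ((j:ℝ)+1)/N with hbdef
    have haI : a ∈ Set.Icc (0:ℝ) 1 := hsub j hj ⟨le_refl a, hab j⟩
    have hconst : δ * F a ω = ∫ _r in a..b, F a ω := by
      rw [intervalIntegral.integral_const, smul_eq_mul, hba j]
    have hdiffint : IntervalIntegrable (fun r => F r ω - F a ω)
        MeasureTheory.volume a b :=
      (hTint j hj ω).sub (intervalIntegrable_const)
    have heq : T j ω - δ * F a ω = ∫ r in a..b, (F r ω - F a ω) := by
      rw [hconst]
      show (∫ r in a..b, F r ω) - _ = _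
      rw [← intervalIntegral.integral_sub (hTint j hj ω) intervalIntegrable_const]
    rw [heq]
    have hlin : IntervalIntegrable (fun r => Lab * (r - a)) MeasureTheory.volume a b :=
      (Continuous.intervalIntegrable (by continuity) a b)
    have hbd := intervalIntegral.norm_integral_le_of_norm_le
      (f := fun r => F r ω - F a ω) (g := fun r => Lab * (r - a)) (μ := MeasureTheory.volume)
      (a := a) (b := b)
      (hab j)
      (ae_of_all _ fun r hr => by
        rw [Real.norm_eq_abs]
        have hrI : r ∈ Set.Ioc a b := hr
        have hr' : r ∈ Set.uIoc a b := by rwa [Set.uIoc_of_le (hab j)]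
        calc |F r ω - F a ω| ≤ Lab * |r - a| := hFlip r (hIsub j hj hr') a haI ω
          _ = Lab * (r - a) := by rw [abs_of_pos (by linarith [hrI.1])])
      hlin
    have hval : (∫ r in a..b, Lab * (r - a)) = Lab * (δ^2 / 2) := by
      rw [intervalIntegral.integral_const_mul]
      congr 1
      rw [intervalIntegral.integral_comp_sub_right (fun x => x) a, sub_self,
        show b - a = δ from hba j]
      rw [integral_id]
      ring
    rw [Real.norm_eq_abs] at hbd
    calc |∫ r in a..b, (F r ω - F a ω)| ≤ |∫ r in a..b, Lab * (r - a)| := hbd.trans (le_abs_self _)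
      _ = Lab * (δ^2 / 2) := by rw [hval, abs_of_nonneg (by positivity)]
  -- cumulative bounds
  have hAbd : ∀ k ≤ N, ∀ ω, |A k ω| ≤ Cab := by
    intro k hk ω
    calc |A k ω| ≤ ∑ j ∈ Finset.range k, |T j ω| := Finset.abs_sum_le_sum_abs _ _
      _ ≤ ∑ _j ∈ Finset.range k, Cab * δ := by
          refine Finset.sum_le_sum fun j hj => ?_
          exact hTbd j (lt_of_lt_of_le (Finset.mem_range.1 hj) hk) ω
      _ = (k:ℝ) * (Cab * δ) := by rw [Finset.sum_const, Finset.card_range, nsmul_eq_mul]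
      _ ≤ (N:ℝ) * (Cab * δ) := by
          refine mul_le_mul_of_nonneg_right ?_ (by positivity)
          exact_mod_cast hk
      _ = Cab := by rw [hδ]; field_simp
  have hBbd : ∀ k ≤ N, ∀ ω, |B k ω| ≤ Cab := by
    intro k hk ω
    calc |B k ω| ≤ ∑ j ∈ Finset.range k, |δ * F ((j:ℝ)/N) ω| :=
        Finset.abs_sum_le_sum_abs _ _
      _ ≤ ∑ _j ∈ Finset.range k, Cab * δ := by
          refine Finset.sum_le_sum fun j hj => ?_
          exact hBstep j (lt_of_lt_of_le (Finset.mem_range.1 hj) hk) ω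
      _ = (k:ℝ) * (Cab * δ) := by rw [Finset.sum_const, Finset.card_range, nsmul_eq_mul]
      _ ≤ (N:ℝ) * (Cab * δ) := by
          refine mul_le_mul_of_nonneg_right ?_ (by positivity)
          exact_mod_cast hk
      _ = Cab := by rw [hδ]; field_simp
  have hABd : ∀ k ≤ N, ∀ ω, |A k ω - B k ω| ≤ Lab * (δ / 2) := by
    intro k hk ω
    have hsplit : A k ω - B k ω
        = ∑ j ∈ Finset.range k, (T j ω - δ * F ((j:ℝ)/N) ω) := by
      simp only [hAdef, hBdef]
      rw [← Finset.sum_sub_distrib]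
    calc |A k ω - B k ω|
        ≤ ∑ j ∈ Finset.range k, |T j ω - δ * F ((j:ℝ)/N) ω| := by
          rw [hsplit]; exact Finset.abs_sum_le_sum_abs _ _
      _ ≤ ∑ _j ∈ Finset.range k, Lab * (δ^2 / 2) := by
          refine Finset.sum_le_sum fun j hj => ?_
          exact hTdiff j (lt_of_lt_of_le (Finset.mem_range.1 hj) hk) ω
      _ = (k:ℝ) * (Lab * (δ^2 / 2)) := by
          rw [Finset.sum_const, Finset.card_range, nsmul_eq_mul]
      _ ≤ (N:ℝ) * (Lab * (δ^2 / 2)) := by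
          refine mul_le_mul_of_nonneg_right ?_ (by positivity)
          exact_mod_cast hk
      _ = Lab * (δ / 2) := by rw [hδ]; field_simp
  -- representation of the two sequences as tilts of π₀
  have hrep : ∀ k, k ≤ N →
      πseq k = gibbsTilt π₀ (A k) ∧ πseq' k = gibbsTilt π₀ (B k) := by
    intro k
    induction k with
    | zero =>
      intro _
      have hA0 : A 0 = fun _ => (0:ℝ) := by funext ω; simp only [hAdef]; simp
      have hB0 : B 0 = fun _ => (0:ℝ) := by funext ω; simp only [hBdef]; simp
      constructor
      · rw [hπ0, hA0, gibbsTilt_zero]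
      · rw [hπ'0, hB0, gibbsTilt_zero]
    | succ k ih =>
      intro hk1
      have hklt : k < N := Nat.lt_of_succ_le hk1
      obtain ⟨h1, h2⟩ := ih hklt.le
      constructor
      · rw [hπ k hklt, h1,
          gibbsTilt_comp (hAm k) (hTm k) (hAbd k hklt.le) (hTbd k hklt)]
        congr 1
        funext ω
        simp only [hAdef]
        exact (Finset.sum_range_succ _ k).symm
      · rw [hπ' k hklt, h2,
          gibbsTilt_comp (hBm k) ((hFs _).const_mul δ) (hBbd k hklt.le)
            (hBstep k hklt)]
        congr 1
        funext ω
        simp only [hBdef]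
        exact (Finset.sum_range_succ _ k).symm
  -- main quantitative estimate on the density difference
  have hmain : ∀ k ≤ N,
      (1 / 2) * ∫ ω, |Real.exp (A k ω) / (∫ ω', Real.exp (A k ω') ∂π₀)
          - Real.exp (B k ω) / (∫ ω', Real.exp (B k ω') ∂π₀)| ∂π₀ ≤ Cg * δ := by
    intro k hk
    by_cases hC0 : Cab = 0
    · -- F vanishes on [0,1] : A k = B k and Cg = 0
      have hF0 : ∀ s ∈ Set.Icc (0:ℝ) 1, ∀ ω, F s ω = 0 := fun s hs ω =>
        abs_eq_zero.1 (le_antisymm (hC0 ▸ hFb s hs ω) (abs_nonneg _))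
      have hAB : A k = B k := by
        funext ω
        simp only [hAdef, hBdef]
        refine Finset.sum_congr rfl fun j hj => ?_
        have hjN : j < N := lt_of_lt_of_le (Finset.mem_range.1 hj) hk
        have hTz : T j ω = 0 := by
          show (∫ r in ((j:ℝ)/N)..(((j:ℝ)+1)/N), F r ω) = 0
          have heqz : Set.EqOn (fun r => F r ω) (fun _ => (0:ℝ))
              (Set.uIcc ((j:ℝ)/N) (((j:ℝ)+1)/N)) := by
            intro r hr
            rw [Set.uIcc_of_le (hab j)] at hr
            exact hF0 r (hsub j hjN hr) ω
          rw [intervalIntegral.integral_congr heqz, intervalIntegral.integral_zero]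
        rw [hTz, hF0 _ (hsub j hjN ⟨le_refl _, hab j⟩) ω, mul_zero]
      have hCg0 : Cg = 0 := by
        rw [hCg, hC0]
        norm_num
      rw [hAB, hCg0]
      simp
    · have hCpos : 0 < Cab := lt_of_le_of_ne hCab (Ne.symm hC0)
      have hεd : ∀ ω, |A k ω - B k ω| ≤ Lab * (δ / 2) := hABd k hk
      have hint := gibbs_density_diff (π := π₀) (hAm k) (hBm k)
        (by positivity : (0:ℝ) ≤ Lab * (δ / 2)) (hAbd k hk) (hBbd k hk) hεd
      have h2ε : 2 * (Lab * (δ / 2)) = Lab * δ := by ring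
      rw [h2ε] at hint
      have hchain : Real.exp (Lab * δ) - 1 ≤ Lab * δ * Real.exp Lab := by
        calc Real.exp (Lab * δ) - 1 ≤ (Lab * δ) * Real.exp (Lab * δ) :=
            exp_sub_one_le_mul_exp (by positivity)
          _ ≤ (Lab * δ) * Real.exp Lab := by
              refine mul_le_mul_of_nonneg_left ?_ (by positivity)
              exact Real.exp_le_exp.2 (by nlinarith)
      set C2 := 4 * Cab * Real.exp (2 * Cab) with hC2
      have hC2pos : 0 < C2 := by rw [hC2]; positivity
      have hC1 : (0:ℝ) ≤ (1 / 2) * Lab * Real.exp Lab := by positivity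
      have hCgge : (1 / 2) * Lab * Real.exp Lab ≤ Cg := by
        rw [hCg]
        have hexp : C2 + 1 ≤ Real.exp C2 := by
          have := Real.add_one_le_exp C2
          linarith
        calc (1 / 2) * Lab * Real.exp Lab
            = ((1 / 2) * Lab * Real.exp Lab) / C2 * C2 := by field_simp
          _ ≤ ((1 / 2) * Lab * Real.exp Lab) / C2 * (Real.exp C2 - 1) := by
              refine mul_le_mul_of_nonneg_left (by linarith) (by positivity)
      calc (1 / 2) * ∫ ω, |Real.exp (A k ω) / (∫ ω', Real.exp (A k ω') ∂π₀)
            - Real.exp (B k ω) / (∫ ω', Real.exp (B k ω') ∂π₀)| ∂π₀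
          ≤ (1 / 2) * (Real.exp (Lab * δ) - 1) := by linarith
        _ ≤ (1 / 2) * (Lab * δ * Real.exp Lab) := by linarith
        _ = ((1 / 2) * Lab * Real.exp Lab) * δ := by ring
        _ ≤ Cg * δ := mul_le_mul_of_nonneg_right hCgge hδpos.le
  -- conclude
  constructor
  · intro k hk
    obtain ⟨h1, h2⟩ := hrep k hk
    rw [h1, h2, tvDist_gibbsTilt (hAm k) (hBm k) (hAbd k hk) (hBbd k hk)]
    exact hmain k hk
  · intro hcompact k hk
    haveI := hcompact
    obtain ⟨h1, h2⟩ := hrep k hk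
    rw [h1, h2]
    refine le_trans (W1_gibbsTilt (hAm k) (hBm k) (hAbd k hk) (hBbd k hk)) ?_
    exact mul_le_mul_of_nonneg_left (hmain k hk) Metric.diam_nonneg
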